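/- Let R > 0, let K : ℝ² → ℝ be continuous and strictly positive on the closed ball B̄_R(0), let k ≥ 1, let q₁, …, q_k lie in the open ball B_R(0), and let t₁, …, t_k ≥ 0 with Σ_{i=1}^k t_i = 1. For Λ > 0 let ν_Λ be the probability measure on B̄_R(0) obtained by normalizing the measure with density y ↦ K(y) Σ_{i=1}^k t_i Λ² / (1 + Λ²|y − q_i|²)² with respect to Lebesgue measure restricted to B̄_R(0). Then, as Λ → +∞, ν_Λ converges weakly to ( Σ_{i=1}^k t_i K(q_i) δ_{q_i} ) / ( Σ_{j=1}^k t_j K(q_j) ). -/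

import Mathlib

open MeasureTheory Filter Topology Metric Real
open scoped BoundedContinuousFunction ENNReal

noncomputable abbrev E2 := EuclideanSpace ℝ (Fin 2)

noncomputable def bubbleC : ℝ :=
  ∫ z : EuclideanSpace ℝ (Fin 2), ((1 + ‖z‖ ^ 2) ^ 2)⁻¹

lemma bubble_integrable :
    Integrable (fun z : EuclideanSpace ℝ (Fin 2) => ((1 + ‖z‖ ^ 2) ^ 2)⁻¹) := by
  have h4 : ((Module.finrank ℝ (EuclideanSpace ℝ (Fin 2)) : ℝ) < 4) := by
    rw [finrank_euclideanSpace_fin]; norm_num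
  have hint := integrable_one_add_norm (μ := (volume : Measure (EuclideanSpace ℝ (Fin 2)))) h4
  refine (hint.const_mul 4).mono' ?_ (ae_of_all _ fun z => ?_)
  · exact (Continuous.aestronglyMeasurable (by
      exact ((continuous_const.add ((continuous_norm).pow 2)).pow 2).inv₀
        (fun z => (by positivity : (1 + ‖z‖ ^ 2) ^ 2 ≠ 0))))
  · have hz : (0:ℝ) ≤ ‖z‖ := norm_nonneg z
    have hrw : (1 + ‖z‖) ^ (-(4:ℝ)) = ((1 + ‖z‖) ^ (4:ℕ))⁻¹ := by
      rw [Real.rpow_neg (by positivity), ← Real.rpow_natCast (1 + ‖z‖) 4]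
      norm_num
    rw [Real.norm_eq_abs, abs_of_nonneg (by positivity), hrw]
    rw [inv_eq_one_div, inv_eq_one_div, mul_div_assoc', mul_one, div_le_div_iff₀ (by positivity) (by positivity)]
    nlinarith [sq_nonneg (1 - ‖z‖), sq_nonneg ‖z‖, sq_nonneg (‖z‖ * (1 - ‖z‖)), sq_nonneg (‖z‖^2 - ‖z‖)]

lemma bubbleC_pos : 0 < bubbleC := by
  rw [bubbleC,
    integral_pos_iff_support_of_nonneg (fun z => by positivity) bubble_integrable]
  have hs : Function.support (fun z : EuclideanSpace ℝ (Fin 2) => ((1 + ‖z‖ ^ 2) ^ 2)⁻¹)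
      = Set.univ := Set.eq_univ_of_forall fun z => ne_of_gt (by positivity)
  rw [hs]
  exact isOpen_univ.measure_pos _ ⟨0, trivial⟩

lemma bubble_key (R : ℝ) (q : EuclideanSpace ℝ (Fin 2))
    (hq : q ∈ ball (0 : EuclideanSpace ℝ (Fin 2)) R)
    (f : EuclideanSpace ℝ (Fin 2) → ℝ) (hf : Continuous f) :
    Tendsto (fun Λ : ℝ => ∫ y in closedBall (0 : EuclideanSpace ℝ (Fin 2)) R,
        f y * (Λ ^ 2 / (1 + Λ ^ 2 * ‖y - q‖ ^ 2) ^ 2)) atTop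
      (𝓝 (bubbleC * f q)) := by
  have hRpos : 0 < R := lt_of_le_of_lt dist_nonneg (mem_ball.1 hq)
  set B : Set E2 := closedBall (0 : E2) R with hBdef
  -- bound on f over B
  obtain ⟨M, hM⟩ := (isCompact_closedBall (0 : E2) R).exists_bound_of_continuousOn
    hf.continuousOn
  have hM0 : 0 ≤ M := le_trans (norm_nonneg _) (hM 0 (mem_closedBall_self hRpos.le))
  have hindb : ∀ x : E2, |B.indicator f x| ≤ M := by
    intro x
    by_cases hx : x ∈ B
    · rw [Set.indicator_of_mem hx]; exact hM x hx
    · rw [Set.indicator_of_notMem hx]; simpa using hM0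
  -- the substituted family
  set F : ℝ → E2 → ℝ := fun Λ z =>
    B.indicator f (q + Λ⁻¹ • z) * ((1 + ‖z‖ ^ 2) ^ 2)⁻¹ with hF
  have hw_cont : Continuous fun z : E2 => ((1 + ‖z‖ ^ 2) ^ 2)⁻¹ :=
    ((continuous_const.add ((continuous_norm).pow 2)).pow 2).inv₀ fun z => (by positivity : (1 + ‖z‖ ^ 2) ^ 2 ≠ 0)
  have hDCT : Tendsto (fun Λ : ℝ => ∫ z, F Λ z) atTop
      (𝓝 (∫ z : E2, f q * ((1 + ‖z‖ ^ 2) ^ 2)⁻¹)) := by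
    apply tendsto_integral_filter_of_dominated_convergence
      (fun z : E2 => M * ((1 + ‖z‖ ^ 2) ^ 2)⁻¹)
    · refine Eventually.of_forall fun Λ => Measurable.aestronglyMeasurable ?_
      refine Measurable.mul ?_ hw_cont.measurable
      exact (hf.measurable.indicator measurableSet_closedBall).comp'
        ((measurable_id.const_smul Λ⁻¹).const_add q)
    · refine Eventually.of_forall fun Λ => ae_of_all _ fun z => ?_
      rw [hF]
      simp only [Real.norm_eq_abs, abs_mul]
      rw [abs_of_nonneg (a := ((1 + ‖z‖ ^ 2) ^ 2)⁻¹) (by positivity)]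
      exact mul_le_mul_of_nonneg_right (hindb _) (by positivity)
    · exact bubble_integrable.const_mul M
    · refine ae_of_all _ fun z => ?_
      have h1 : Tendsto (fun Λ : ℝ => q + Λ⁻¹ • z) atTop (𝓝 q) := by
        have := (tendsto_inv_atTop_zero (𝕜 := ℝ)).smul_const z
        rw [zero_smul] at this
        simpa using tendsto_const_nhds.add this
      have h2 : Tendsto (fun Λ : ℝ => f (q + Λ⁻¹ • z)) atTop (𝓝 (f q)) := by
        have := (hf.tendsto q).comp h1
        exact this
      have hev : (fun Λ : ℝ => f (q + Λ⁻¹ • z)) =ᶠ[atTop]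
          fun Λ => B.indicator f (q + Λ⁻¹ • z) := by
        filter_upwards [h1.eventually (isOpen_ball.eventually_mem hq)] with Λ hmem
        rw [Set.indicator_of_mem (ball_subset_closedBall hmem)]
      exact (h2.congr' hev).mul_const _
  have hval : (∫ z : E2, f q * ((1 + ‖z‖ ^ 2) ^ 2)⁻¹) = bubbleC * f q := by
    rw [integral_const_mul, bubbleC, mul_comm]
  rw [hval] at hDCT
  -- Step 1: eventual equality
  refine Tendsto.congr' ?_ hDCT
  filter_upwards [eventually_gt_atTop (0 : ℝ)] with Λ hΛ
  -- change of variables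
  set G : E2 → ℝ := fun y => B.indicator f y * (Λ ^ 2 / (1 + Λ ^ 2 * ‖y - q‖ ^ 2) ^ 2) with hG
  have hcomp : ∀ z : E2, G (q + Λ⁻¹ • z) = Λ ^ 2 * F Λ z := by
    intro z
    rw [hG, hF]
    have hnorm : ‖q + Λ⁻¹ • z - q‖ ^ 2 = Λ⁻¹ ^ 2 * ‖z‖ ^ 2 := by
      rw [add_sub_cancel_left, norm_smul]
      rw [Real.norm_eq_abs, abs_of_pos (inv_pos.2 hΛ)]
      ring
    simp only []
    rw [hnorm]
    have h12 : (1 : ℝ) + Λ ^ 2 * (Λ⁻¹ ^ 2 * ‖z‖ ^ 2) = 1 + ‖z‖ ^ 2 := by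
      field_simp
    rw [h12, div_eq_mul_inv]
    ring
  have hchg : (∫ x : E2, G (q + x)) = Λ⁻¹ ^ 2 * ∫ z : E2, G (q + Λ⁻¹ • z) := by
    have h := MeasureTheory.Measure.integral_comp_smul (volume : Measure E2)
      (fun x => G (q + x)) Λ⁻¹
    rw [finrank_euclideanSpace_fin] at h
    have h2 : (∫ z : E2, G (q + Λ⁻¹ • z)) = |((Λ⁻¹ : ℝ) ^ 2)⁻¹| • ∫ x : E2, G (q + x) := h
    rw [h2, smul_eq_mul, abs_of_pos (by positivity)]
    field_simp
  symm
  calc ∫ y in B, f y * (Λ ^ 2 / (1 + Λ ^ 2 * ‖y - q‖ ^ 2) ^ 2)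
      = ∫ y : E2, G y := by
        rw [hG, ← integral_indicator measurableSet_closedBall]
        congr 1; ext y
        by_cases hy : y ∈ B
        · simp [Set.indicator_of_mem hy, Set.indicator_of_mem (show y ∈ closedBall (0:E2) R from hy)]
        · simp [Set.indicator_of_notMem hy, Set.indicator_of_notMem (show y ∉ closedBall (0:E2) R from hy)]
    _ = ∫ x : E2, G (q + x) := (integral_add_left_eq_self G q).symm
    _ = Λ⁻¹ ^ 2 * ∫ z : E2, G (q + Λ⁻¹ • z) := hchg
    _ = Λ⁻¹ ^ 2 * ∫ z : E2, Λ ^ 2 * F Λ z := by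
        congr 1; exact integral_congr_ae (ae_of_all _ fun z => hcomp z)
    _ = ∫ z : E2, F Λ z := by
        rw [integral_const_mul]
        field_simp

/-- Let `K` be continuous and positive on the closed ball `B̄_R(0) ⊆ ℝ²`,
and let `q₁,…,q_k ∈ B_R(0)`, `tᵢ ≥ 0`, `Σ tᵢ = 1`. The probability measures obtained by
normalizing the densities `y ↦ K(y) Σᵢ tᵢ Λ²/(1+Λ²|y−qᵢ|²)²` on `B̄_R(0)` converge
weakly, as `Λ → +∞`, to `(Σᵢ tᵢ K(qᵢ) δ_{qᵢ}) / (Σⱼ tⱼ K(qⱼ))`. -/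
theorem weighted_bubble_combination_weak_convergence
    (R : ℝ) (hR : 0 < R)
    (K : EuclideanSpace ℝ (Fin 2) → ℝ) (hKcont : Continuous K)
    (hKpos : ∀ y ∈ closedBall (0 : EuclideanSpace ℝ (Fin 2)) R, 0 < K y)
    (k : ℕ) (hk : 1 ≤ k)
    (q : Fin k → EuclideanSpace ℝ (Fin 2))
    (hq : ∀ i, q i ∈ ball (0 : EuclideanSpace ℝ (Fin 2)) R)
    (t : Fin k → ℝ) (ht : ∀ i, 0 ≤ t i) (hsum : ∑ i, t i = 1)
    (m : ℝ → Measure (EuclideanSpace ℝ (Fin 2)))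
    (hm : ∀ Λ, m Λ =
      ((volume : Measure (EuclideanSpace ℝ (Fin 2))).restrict
          (closedBall (0 : EuclideanSpace ℝ (Fin 2)) R)).withDensity
        (fun y => ENNReal.ofReal
          (K y * ∑ i, t i * (Λ ^ 2 / (1 + Λ ^ 2 * ‖y - q i‖ ^ 2) ^ 2))))
    (ν : ℝ → Measure (EuclideanSpace ℝ (Fin 2)))
    (hν : ∀ Λ, ν Λ = ((m Λ) Set.univ)⁻¹ • m Λ) :
    ∀ g : EuclideanSpace ℝ (Fin 2) →ᵇ ℝ,
      Tendsto (fun Λ : ℝ => ∫ y, g y ∂(ν Λ)) atTop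
        (𝓝 ((∑ i, t i * K (q i) * g (q i)) / (∑ j, t j * K (q j)))) := by
  intro g
  set B : Set E2 := closedBall (0 : E2) R with hBdef
  set ρ : ℝ → E2 → ℝ := fun Λ y =>
    K y * ∑ i, t i * (Λ ^ 2 / (1 + Λ ^ 2 * ‖y - q i‖ ^ 2) ^ 2) with hρ
  have hker_cont : ∀ (Λ : ℝ) (i : Fin k),
      Continuous fun y : E2 => Λ ^ 2 / (1 + Λ ^ 2 * ‖y - q i‖ ^ 2) ^ 2 := by
    intro Λ i
    refine continuous_const.div ?_ fun y => by positivity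
    exact (continuous_const.add
      (continuous_const.mul (((continuous_id.sub continuous_const).norm).pow 2))).pow 2
  have hρ_cont : ∀ Λ, Continuous (ρ Λ) := fun Λ =>
    hKcont.mul (continuous_finset_sum _ fun i _ => continuous_const.mul (hker_cont Λ i))
  -- limits of numerator and denominator
  set A : ℝ := ∑ i, t i * K (q i) * g (q i) with hA
  set S : ℝ := ∑ j, t j * K (q j) with hS
  set N : ℝ → ℝ := fun Λ => ∫ y in B, ρ Λ y * g y with hN
  set D : ℝ → ℝ := fun Λ => ∫ y in B, ρ Λ y with hD
  have key_sum : ∀ (f : E2 → ℝ), Continuous f →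
      Tendsto (fun Λ : ℝ => ∫ y in B, (∑ i, t i * ((K y * f y) *
          (Λ ^ 2 / (1 + Λ ^ 2 * ‖y - q i‖ ^ 2) ^ 2)))) atTop
        (𝓝 (bubbleC * ∑ i, t i * K (q i) * f (q i))) := by
    intro f hf
    have hterm : ∀ Λ : ℝ, (∫ y in B, (∑ i, t i * ((K y * f y) *
        (Λ ^ 2 / (1 + Λ ^ 2 * ‖y - q i‖ ^ 2) ^ 2)))) =
        ∑ i, t i * ∫ y in B, (K y * f y) * (Λ ^ 2 / (1 + Λ ^ 2 * ‖y - q i‖ ^ 2) ^ 2) := by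
      intro Λ
      rw [integral_finset_sum]
      · exact Finset.sum_congr rfl fun i _ => integral_const_mul _ _
      · intro i _
        exact (continuous_const.mul (((hKcont.mul hf)).mul
          (hker_cont Λ i))).continuousOn.integrableOn_compact (isCompact_closedBall _ _)
    have hlim : Tendsto (fun Λ : ℝ => ∑ i, t i *
        ∫ y in B, (K y * f y) * (Λ ^ 2 / (1 + Λ ^ 2 * ‖y - q i‖ ^ 2) ^ 2)) atTop
        (𝓝 (∑ i, t i * (bubbleC * (K (q i) * f (q i))))) := by
      refine tendsto_finset_sum _ fun i _ => ?_
      exact (bubble_key R (q i) (hq i) (fun y => K y * f y) (hKcont.mul hf)).const_mul (t i)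
    have : (∑ i, t i * (bubbleC * (K (q i) * f (q i)))) =
        bubbleC * ∑ i, t i * K (q i) * f (q i) := by
      rw [Finset.mul_sum]; exact Finset.sum_congr rfl fun i _ => by ring
    rw [this] at hlim
    exact Tendsto.congr (fun Λ => (hterm Λ).symm) hlim
  have hNlim : Tendsto N atTop (𝓝 (bubbleC * A)) := by
    have := key_sum (fun y => g y) g.continuous
    refine Tendsto.congr (fun Λ => ?_) this
    rw [hN]
    refine integral_congr_ae (ae_of_all _ fun y => ?_)
    rw [hρ]
    simp only [Finset.sum_mul, Finset.mul_sum]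
    exact Finset.sum_congr rfl fun i _ => by ring
  have hDlim : Tendsto D atTop (𝓝 (bubbleC * S)) := by
    have := key_sum (fun _ => 1) continuous_const
    simp only [mul_one] at this
    refine Tendsto.congr (fun Λ => ?_) this
    rw [hD]
    refine integral_congr_ae (ae_of_all _ fun y => ?_)
    rw [hρ]
    simp only [Finset.mul_sum]
    exact Finset.sum_congr rfl fun i _ => by ring
  -- positivity of S
  have hSpos : 0 < S := by
    have hex : ∃ i : Fin k, 0 < t i := by
      by_contra h
      push_neg at h
      have : (∑ i, t i) = 0 :=
        Finset.sum_eq_zero fun i _ => le_antisymm (h i) (ht i)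
      rw [this] at hsum; norm_num at hsum
    obtain ⟨i, hi⟩ := hex
    refine Finset.sum_pos' (fun j _ => mul_nonneg (ht j)
      (hKpos (q j) (ball_subset_closedBall (hq j))).le) ⟨i, Finset.mem_univ i, ?_⟩
    exact mul_pos hi (hKpos (q i) (ball_subset_closedBall (hq i)))
  have hcS : 0 < bubbleC * S := mul_pos bubbleC_pos hSpos
  -- eventual positivity of D and eventual formula
  have hDev : ∀ᶠ Λ in atTop, 0 < D Λ := hDlim.eventually (eventually_gt_nhds hcS)
  have hev : ∀ᶠ Λ in atTop, (fun Λ : ℝ => N Λ / D Λ) Λ = ∫ y, g y ∂(ν Λ) := by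
    filter_upwards [hDev] with Λ hDpos
    have hnn : 0 ≤ᵐ[volume.restrict B] ρ Λ := by
      refine (ae_restrict_iff' measurableSet_closedBall).2 (ae_of_all _ fun y hy => ?_)
      exact mul_nonneg (hKpos y hy).le
        (Finset.sum_nonneg fun i _ => mul_nonneg (ht i) (by positivity))
    have hint : Integrable (ρ Λ) (volume.restrict B) :=
      (hρ_cont Λ).continuousOn.integrableOn_compact (isCompact_closedBall _ _)
    have huniv : m Λ Set.univ = ENNReal.ofReal (D Λ) := by
      rw [hm Λ, withDensity_apply _ MeasurableSet.univ, Measure.restrict_univ]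
      rw [← ofReal_integral_eq_lintegral_ofReal hint hnn]
    have hgint : (∫ y, g y ∂(m Λ)) = N Λ := by
      rw [hm Λ]
      have hrfl : (fun y : E2 => ENNReal.ofReal (ρ Λ y)) =
          fun y : E2 => (↑(Real.toNNReal (ρ Λ y)) : ℝ≥0∞) := rfl
      rw [hrfl, integral_withDensity_eq_integral_smul
        ((hρ_cont Λ).measurable.real_toNNReal) (fun y => g y)]
      refine integral_congr_ae ?_
      filter_upwards [hnn] with y hy
      rw [NNReal.smul_def, Real.coe_toNNReal _ hy, smul_eq_mul]
    rw [hν Λ, integral_smul_measure, huniv, ENNReal.toReal_inv,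
      ENNReal.toReal_ofReal hDpos.le, hgint, smul_eq_mul, div_eq_inv_mul]
  refine Tendsto.congr' hev ?_
  have := hNlim.div hDlim (ne_of_gt hcS)
  rwa [mul_div_mul_left A S (ne_of_gt bubbleC_pos)] at this
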